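/- arXiv:1307.3047 — 8 statements merged into one kernel-verified Lean document; each statement's English description precedes it below -/
import Mathlib

section
/- The map chi: R -> C^x defined by chi(a+ub) = i^(a+b) is a group homomorphism from the additive group of R to the nonzero complex numbers, and chi is nontrivial when restricted to every nonzero ideal of R; hence chi is a generating character and R is a Frobenius ring. -/
open TrivSqZeroExt

/-- The character `χ(a + u b) = i^(a+b)` on `R = Z4 + uZ4`. -/
noncomputable def chi (x : DualNumber (ZMod 4)) : ℂ :=
  Complex.I ^ ((x.fst + x.snd : ZMod 4)).val

instance : DecidableEq (DualNumber (ZMod 4)) :=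
  fun a b => decidable_of_iff (a.fst = b.fst ∧ a.snd = b.snd)
    ⟨fun h => TrivSqZeroExt.ext h.1 h.2, fun h => ⟨by rw [h], by rw [h]⟩⟩

instance : Fintype (DualNumber (ZMod 4)) :=
  Fintype.ofEquiv (ZMod 4 × ZMod 4) (Equiv.refl _)

lemma key : ∀ x : DualNumber (ZMod 4), x ≠ 0 → ∃ r, r * x = (inr 2 : DualNumber (ZMod 4)) := by
  decide


/-- `χ(a+ub) = i^(a+b)` is a homomorphism from the additive group of `R`
to the nonzero complex numbers, and `χ` is nontrivial when restricted to every nonzero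
ideal of `R` (i.e. `χ` is a generating character for `R`). -/
theorem stmt_5 :
    (∀ x : DualNumber (ZMod 4), chi x ≠ 0) ∧
    (∀ x y : DualNumber (ZMod 4), chi (x + y) = chi x * chi y) ∧
    (∀ I : Ideal (DualNumber (ZMod 4)), I ≠ ⊥ → ∃ x ∈ I, chi x ≠ 1) := by
  have hI4 : Complex.I ^ 4 = 1 := by
    simp [pow_succ, Complex.I_mul_I]
  refine ⟨fun x => pow_ne_zero _ Complex.I_ne_zero, fun x y => ?_, fun I hI => ?_⟩
  · show Complex.I ^ (((x + y).fst + (x + y).snd : ZMod 4)).val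
      = Complex.I ^ ((x.fst + x.snd : ZMod 4)).val * Complex.I ^ ((y.fst + y.snd : ZMod 4)).val
    rw [← pow_add, fst_add, snd_add]
    have : ((x.fst + y.fst) + (x.snd + y.snd) : ZMod 4)
        = (x.fst + x.snd) + (y.fst + y.snd) := by ring
    rw [this, ZMod.val_add, ← pow_eq_pow_mod _ hI4]
  · obtain ⟨x, hxI, hx0⟩ := Submodule.exists_mem_ne_zero_of_ne_bot hI
    obtain ⟨r, hr⟩ := key x hx0
    refine ⟨inr 2, hr ▸ I.mul_mem_left r hxI, ?_⟩
    show Complex.I ^ (((inr 2 : DualNumber (ZMod 4)).fst + (inr 2 : DualNumber (ZMod 4)).snd : ZMod 4)).val ≠ 1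
    rw [fst_inr, snd_inr]
    rw [zero_add, show (2 : ZMod 4).val = 2 from rfl, Complex.I_sq]
    norm_num
end

section
/- If C is a linear code (R-submodule) of R^n, then its Gray image phi(C) is a Z4-linear code of length 2n with the same cardinality and the same Lee weight enumerator as C. -/
open TrivSqZeroExt

/-- The Lee weight on `Z4`: `w(0)=0, w(1)=w(3)=1, w(2)=2`. -/
def leeZ4 (x : ZMod 4) : ℕ := min x.val (4 - x.val)

/-- The Lee weight on `R = Z4 + uZ4`: `w(a+ub) = w(b) + w(a+b)`. -/
def leeR (x : DualNumber (ZMod 4)) : ℕ := leeZ4 x.snd + leeZ4 (x.fst + x.snd)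

/-- Lee weight of a vector over `Z4`. -/
def wtZ4 {ι : Type*} [Fintype ι] (x : ι → ZMod 4) : ℕ := ∑ i, leeZ4 (x i)

/-- Lee weight of a vector over `R`. -/
def wtR {n : ℕ} (x : Fin n → DualNumber (ZMod 4)) : ℕ := ∑ i, leeR (x i)

/-- The Gray map `φ : R^n → Z4^{2n}`, `φ(a + u b) = (b, a + b)` coordinatewise. -/
def gray {n : ℕ} (x : Fin n → DualNumber (ZMod 4)) : Fin n ⊕ Fin n → ZMod 4 :=
  Sum.elim (fun i => (x i).snd) (fun i => (x i).fst + (x i).snd)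

/-- The Gray map as a `ZMod 4`-linear map. -/
def grayLin (n : ℕ) :
    (Fin n → DualNumber (ZMod 4)) →ₗ[ZMod 4] (Fin n ⊕ Fin n → ZMod 4) where
  toFun := gray
  map_add' x y := by
    funext j
    cases j <;> simp [gray] <;> ring
  map_smul' c x := by
    funext j
    cases j <;> simp [gray, smul_eq_mul, mul_add]

lemma gray_injective (n : ℕ) :
    Function.Injective (gray (n := n)) := by
  intro x y h
  funext i
  have h1 := congrFun h (Sum.inl i)
  have h2 := congrFun h (Sum.inr i)
  simp only [gray, Sum.elim_inl, Sum.elim_inr] at h1 h2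
  ext
  · have := h2
    rw [h1] at this
    exact add_right_cancel this
  · exact h1

lemma wt_gray {n : ℕ} (x : Fin n → DualNumber (ZMod 4)) :
    wtZ4 (gray x) = wtR x := by
  simp only [wtZ4, wtR, leeR, gray, Fintype.sum_sum_type, Sum.elim_inl, Sum.elim_inr]
  rw [← Finset.sum_add_distrib]

/-- if `C` is a linear code over `R` of length `n`, its Gray image
`φ(C)` is a `Z4`-linear code of length `2n` with the same cardinality and the same
Lee weight enumerator (i.e. the same number of codewords of each Lee weight). -/
theorem stmt_7 (n : ℕ) (C : Submodule (DualNumber (ZMod 4)) (Fin n → DualNumber (ZMod 4))) :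
    (∃ D : Submodule (ZMod 4) (Fin n ⊕ Fin n → ZMod 4),
      (D : Set (Fin n ⊕ Fin n → ZMod 4)) = gray '' (C : Set (Fin n → DualNumber (ZMod 4)))) ∧
    Nat.card (gray '' (C : Set (Fin n → DualNumber (ZMod 4))) : Set (Fin n ⊕ Fin n → ZMod 4)) =
      Nat.card C ∧
    ∀ w : ℕ,
      Nat.card {x : Fin n → DualNumber (ZMod 4) // x ∈ C ∧ wtR x = w} =
      Nat.card {y : Fin n ⊕ Fin n → ZMod 4 //
        y ∈ gray '' (C : Set (Fin n → DualNumber (ZMod 4))) ∧ wtZ4 y = w} := by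
  refine ⟨⟨Submodule.map (grayLin n) (C.restrictScalars (ZMod 4)), ?_⟩, ?_, ?_⟩
  · simp [Submodule.map_coe, grayLin]
  · exact Nat.card_image_of_injective (gray_injective n) _
  · intro w
    refine Nat.card_congr (Equiv.ofBijective
      (fun x => ⟨gray x.1, ⟨x.1, x.2.1, rfl⟩, by rw [wt_gray]; exact x.2.2⟩) ⟨?_, ?_⟩)
    · intro a b hab
      exact Subtype.ext (gray_injective n (congrArg Subtype.val hab))
    · rintro ⟨y, ⟨x, hx, rfl⟩, hw⟩
      exact ⟨⟨x, hx, by rw [← wt_gray]; exact hw⟩, rfl⟩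
end

section
/- If C is a self-orthogonal linear code over R = Z4 + uZ4, then for every codeword c in C, the number of coordinates of c lying in U1 = {1,3,1+2u,3+2u} is even, and the number of coordinates lying in U2 = {1+u,3+u,1+3u,3+3u} is even. -/
open DualNumber

instance inst_s9 : DecidableEq (DualNumber (ZMod 4)) := inferInstanceAs (DecidableEq (ZMod 4 × ZMod 4))
instance inst_s9_2 : Fintype (DualNumber (ZMod 4)) := inferInstanceAs (Fintype (ZMod 4 × ZMod 4))

lemma sq_eq_ite (x : DualNumber (ZMod 4)) :
    x * x = (if x ∈ ({1, 3, 1 + 2 * eps, 3 + 2 * eps} : Set (DualNumber (ZMod 4))) then 1 else 0)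
      + (if x ∈ ({1 + eps, 3 + eps, 1 + 3 * eps, 3 + 3 * eps} : Set (DualNumber (ZMod 4)))
          then 1 + 2 * eps else 0) := by
  revert x; decide

/-- if `C ⊆ R^n` is self-orthogonal, then every codeword has an even
number of coordinates in `U1 = {1,3,1+2u,3+2u}` and an even number of coordinates in
`U2 = {1+u,3+u,1+3u,3+3u}`. -/
theorem stmt_9 (n : ℕ) (C : Submodule (DualNumber (ZMod 4)) (Fin n → DualNumber (ZMod 4)))
    (hC : ∀ x ∈ C, ∀ y ∈ C, ∑ i, x i * y i = 0) :
    ∀ c ∈ C,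
      Even (Nat.card {i : Fin n //
        c i ∈ ({1, 3, 1 + 2 * eps, 3 + 2 * eps} : Set (DualNumber (ZMod 4)))}) ∧
      Even (Nat.card {i : Fin n //
        c i ∈ ({1 + eps, 3 + eps, 1 + 3 * eps, 3 + 3 * eps} : Set (DualNumber (ZMod 4)))}) := by
  intro c hc
  have h := hC c hc c hc
  set S1 : Set (DualNumber (ZMod 4)) := {1, 3, 1 + 2 * eps, 3 + 2 * eps} with hS1
  set S2 : Set (DualNumber (ZMod 4)) := {1 + eps, 3 + eps, 1 + 3 * eps, 3 + 3 * eps} with hS2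
  set a := (Finset.univ.filter (fun i : Fin n => c i ∈ S1)).card with ha
  set b := (Finset.univ.filter (fun i : Fin n => c i ∈ S2)).card with hb
  have hsum : (∑ i, c i * c i)
      = a • (1 : DualNumber (ZMod 4)) + b • (1 + 2 * eps) := by
    simp_rw [sq_eq_ite]
    rw [Finset.sum_add_distrib, ← Finset.sum_filter, ← Finset.sum_filter,
      Finset.sum_const, Finset.sum_const]
  rw [h] at hsum
  have hfst := congrArg TrivSqZeroExt.fst hsum.symm
  have hsnd := congrArg TrivSqZeroExt.snd hsum.symm
  simp [TrivSqZeroExt.fst_add, TrivSqZeroExt.snd_add] at hfst hsnd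
  -- hfst : (a : ZMod 4) + b = 0 (roughly), hsnd : 2 * b = 0 (roughly)
  have hab : ((a + b : ℕ) : ZMod 4) = 0 := by push_cast; exact hfst
  have hf2 : TrivSqZeroExt.fst (2 : (ZMod 4)[ε]) = 2 := rfl
  rw [hf2] at hsnd
  have h2b : ((2 * b : ℕ) : ZMod 4) = 0 := by push_cast; rw [mul_comm]; exact hsnd
  have d1 : (4 : ℕ) ∣ a + b := (ZMod.natCast_eq_zero_iff _ _).mp hab
  have d2 : (4 : ℕ) ∣ 2 * b := (ZMod.natCast_eq_zero_iff _ _).mp h2b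
  have c1 : Nat.card {i : Fin n // c i ∈ S1} = a := by
    rw [Nat.card_eq_fintype_card, Fintype.card_subtype]
  have c2 : Nat.card {i : Fin n // c i ∈ S2} = b := by
    rw [Nat.card_eq_fintype_card, Fintype.card_subtype]
  rw [c1, c2, Nat.even_iff, Nat.even_iff]
  omega
end

section
/- If C is a self-dual linear code over R = Z4 + uZ4 of length n, then the all-2u vector (2u, 2u, ..., 2u) of length n belongs to C. -/
open DualNumber

lemma two_sq_aux : ∀ a : ZMod 4, 2 * a = 2 * (a * a) := by decide

lemma snd_two_eps_mul (r : DualNumber (ZMod 4)) :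
    ((2 * eps : DualNumber (ZMod 4)) * r).snd = 2 * r.fst := by
  have h2 : ((2 : DualNumber (ZMod 4))).fst = (2 : ZMod 4) := by
    rw [show ((2:DualNumber (ZMod 4))) = ((2:ℕ) : DualNumber (ZMod 4)) by norm_num,
      TrivSqZeroExt.fst_natCast]; norm_num
  rw [TrivSqZeroExt.snd_mul, TrivSqZeroExt.fst_mul, TrivSqZeroExt.snd_mul]
  simp [DualNumber.fst_eps, DualNumber.snd_eps, h2]

lemma fst_two_eps_mul (r : DualNumber (ZMod 4)) :
    ((2 * eps : DualNumber (ZMod 4)) * r).fst = 0 := by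
  rw [TrivSqZeroExt.fst_mul, TrivSqZeroExt.fst_mul]
  simp [DualNumber.fst_eps]

/-- if `C ⊆ R^n` is self-dual, then the all-`2u` vector belongs to `C`. -/
theorem stmt_10 (n : ℕ) (C : Submodule (DualNumber (ZMod 4)) (Fin n → DualNumber (ZMod 4)))
    (hC : (C : Set (Fin n → DualNumber (ZMod 4))) =
      {y | ∀ x ∈ C, ∑ i, y i * x i = 0}) :
    (fun _ : Fin n => (2 * eps : DualNumber (ZMod 4))) ∈ C := by
  have key : ∀ x ∈ C, ∑ i, (2 * eps : DualNumber (ZMod 4)) * x i = 0 := by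
    intro x hx
    have hx2 : ∑ i, x i * x i = 0 := by
      have hmem : x ∈ {y : Fin n → DualNumber (ZMod 4) | ∀ x ∈ C, ∑ i, y i * x i = 0} :=
        hC ▸ hx
      exact hmem x hx
    have hfst : ∑ i, (x i).fst * (x i).fst = 0 := by
      have := congrArg TrivSqZeroExt.fst hx2
      simpa [TrivSqZeroExt.fst_sum, TrivSqZeroExt.fst_mul] using this
    apply TrivSqZeroExt.ext
    · simp [TrivSqZeroExt.fst_sum, fst_two_eps_mul]
    · simp only [TrivSqZeroExt.snd_sum, TrivSqZeroExt.snd_zero]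
      calc ∑ i, ((2 * eps : DualNumber (ZMod 4)) * x i).snd
          = ∑ i, 2 * (x i).fst := Finset.sum_congr rfl fun i _ => snd_two_eps_mul _
        _ = ∑ i, 2 * ((x i).fst * (x i).fst) :=
            Finset.sum_congr rfl fun i _ => two_sq_aux _
        _ = 2 * ∑ i, (x i).fst * (x i).fst := by rw [Finset.mul_sum]
        _ = 0 := by rw [hfst]; ring
  rw [← SetLike.mem_coe, hC]
  exact key
end

section
/- If C is a self-dual linear code over R = Z4 + uZ4 of length n, then mu(C) is a self-orthogonal Z4-linear code of length n, where mu(a+ub) = a. -/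
open TrivSqZeroExt

/-- if `C ⊆ R^n` is self-dual, then the projection
`μ(C)` (with `μ(a+ub) = a` coordinatewise) is a self-orthogonal `Z4`-code. -/
theorem stmt_13 (n : ℕ) (C : Submodule (DualNumber (ZMod 4)) (Fin n → DualNumber (ZMod 4)))
    (hC : (C : Set (Fin n → DualNumber (ZMod 4))) =
      {y | ∀ x ∈ C, ∑ i, y i * x i = 0}) :
    ∀ a₁ ∈ (fun x (i : Fin n) => (x i).fst) '' (C : Set (Fin n → DualNumber (ZMod 4))),
      ∀ a₂ ∈ (fun x (i : Fin n) => (x i).fst) '' (C : Set (Fin n → DualNumber (ZMod 4))),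
        ∑ i, a₁ i * a₂ i = (0 : ZMod 4) := by
  rintro a₁ ⟨x, hx, rfl⟩ a₂ ⟨y, hy, rfl⟩
  have hx' : x ∈ {y | ∀ x ∈ C, ∑ i, y i * x i = 0} := hC ▸ hx
  have h := hx' y hy
  have h2 := congrArg TrivSqZeroExt.fst h
  simpa [TrivSqZeroExt.fst_sum, TrivSqZeroExt.fst_mul] using h2
end

section
/- Let C be a self-dual linear code over R = Z4 + uZ4 of length n such that nu(C) is self-orthogonal over Z4 (where nu(a+ub) = b). Then the Gray image phi(C) is a self-dual Z4-code of length 2n. -/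
open TrivSqZeroExt

/-- An auxiliary linear change of coordinates on `Z4^{2n}`. -/
def grayT {n : ℕ} (z : Fin n ⊕ Fin n → ZMod 4) : Fin n ⊕ Fin n → ZMod 4 :=
  Sum.elim (fun i => z (Sum.inr i) + 2 * z (Sum.inl i)) (fun i => z (Sum.inl i))

/-- Inverse of `grayT`. -/
def grayTInv {n : ℕ} (z : Fin n ⊕ Fin n → ZMod 4) : Fin n ⊕ Fin n → ZMod 4 :=
  Sum.elim (fun i => z (Sum.inr i)) (fun i => z (Sum.inl i) + 2 * z (Sum.inr i))

lemma grayT_leftInv {n : ℕ} (z : Fin n ⊕ Fin n → ZMod 4) : grayTInv (grayT z) = z := by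
  funext j
  cases j with
  | inl i => simp [grayT, grayTInv]
  | inr i =>
      simp only [grayT, grayTInv, Sum.elim_inl, Sum.elim_inr]
      ring_nf
      rw [show (4 : ZMod 4) = 0 by decide]
      ring

lemma grayT_rightInv {n : ℕ} (z : Fin n ⊕ Fin n → ZMod 4) : grayT (grayTInv z) = z := by
  funext j
  cases j with
  | inl i =>
      simp only [grayT, grayTInv, Sum.elim_inl, Sum.elim_inr]
      ring_nf
      rw [show (4 : ZMod 4) = 0 by decide]
      ring
  | inr i => simp [grayT, grayTInv]

lemma grayT_injective {n : ℕ} : Function.Injective (grayT (n := n)) :=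
  Function.LeftInverse.injective grayT_leftInv

/-- Inverse of the Gray map. -/
def grayInv {n : ℕ} (z : Fin n ⊕ Fin n → ZMod 4) : Fin n → DualNumber (ZMod 4) :=
  fun i => (z (Sum.inr i) - z (Sum.inl i), z (Sum.inl i))

lemma gray_grayInv {n : ℕ} (z : Fin n ⊕ Fin n → ZMod 4) : gray (grayInv z) = z := by
  funext j
  cases j with
  | inl i => simp [gray, grayInv]
  | inr i => simp [gray, grayInv]

/-- The Gray inner product in terms of the ring inner product. -/
lemma key1 {n : ℕ} (x y : Fin n → DualNumber (ZMod 4)) :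
    ∑ j, gray x j * gray y j
      = (∑ i, x i * y i).fst + (∑ i, x i * y i).snd
        + 2 * ∑ i, (x i).snd * (y i).snd := by
  rw [Fintype.sum_sum_type]
  simp only [gray, Sum.elim_inl, Sum.elim_inr, fst_sum, snd_sum, snd_mul, fst_mul,
    smul_eq_mul, op_smul_eq_mul, Finset.mul_sum]
  rw [← Finset.sum_add_distrib, ← Finset.sum_add_distrib, ← Finset.sum_add_distrib]
  exact Finset.sum_congr rfl fun i _ => by ring

/-- The twisted Gray inner product computes the `snd` part of the ring inner product. -/
lemma key2 {n : ℕ} (x y : Fin n → DualNumber (ZMod 4)) :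
    ∑ j, grayT (gray x) j * gray y j = (∑ i, x i * y i).snd := by
  rw [Fintype.sum_sum_type]
  simp only [gray, grayT, Sum.elim_inl, Sum.elim_inr, snd_sum, snd_mul, fst_mul,
    smul_eq_mul, op_smul_eq_mul]
  rw [← Finset.sum_add_distrib]
  refine Finset.sum_congr rfl fun i _ => ?_
  have h4 : (4 : ZMod 4) = 0 := by decide
  ring_nf
  rw [h4]
  ring

/-- if `C ⊆ R^n` is self-dual and `ν(C)` is self-orthogonal over `Z4`
(with `ν(a+ub) = b`), then the Gray image `φ(C)` is a self-dual `Z4`-code of length `2n`. -/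
theorem stmt_15 (n : ℕ) (C : Submodule (DualNumber (ZMod 4)) (Fin n → DualNumber (ZMod 4)))
    (hC : (C : Set (Fin n → DualNumber (ZMod 4))) =
      {y | ∀ x ∈ C, ∑ i, y i * x i = 0})
    (hnu : ∀ x ∈ C, ∀ y ∈ C, ∑ i, (x i).snd * (y i).snd = (0 : ZMod 4)) :
    gray '' (C : Set (Fin n → DualNumber (ZMod 4))) =
      {z : Fin n ⊕ Fin n → ZMod 4 |
        ∀ w ∈ gray '' (C : Set (Fin n → DualNumber (ZMod 4))), ∑ j, z j * w j = 0} := by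
  have hmem : ∀ x ∈ C, ∀ y ∈ C, ∑ i, x i * y i = 0 := by
    intro x hx y hy
    have hx' : x ∈ {y | ∀ x ∈ C, ∑ i, y i * x i = 0} := hC ▸ hx
    exact hx' y hy
  set S : Set (Fin n ⊕ Fin n → ZMod 4) :=
    gray '' (C : Set (Fin n → DualNumber (ZMod 4))) with hSdef
  -- self-orthogonality of the Gray image
  have hsub : S ⊆ {z | ∀ w ∈ S, ∑ j, z j * w j = 0} := by
    rintro _ ⟨x, hx, rfl⟩ _ ⟨y, hy, rfl⟩
    rw [key1, hmem x hx y hy, hnu x hx y hy]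
    simp
  -- the dual of S is the image of S under the bijection grayT
  have hdual : {z | ∀ w ∈ S, ∑ j, z j * w j = 0} = grayT '' S := by
    ext z
    constructor
    · intro hz
      -- candidate preimage
      set x : Fin n → DualNumber (ZMod 4) := grayInv (grayTInv z) with hxdef
      have hgx : gray x = grayTInv z := gray_grayInv _
      have hTz : grayT (gray x) = z := by rw [hgx, grayT_rightInv]
      -- x is in C
      have hxC : x ∈ C := by
        have : x ∈ (C : Set (Fin n → DualNumber (ZMod 4))) := by
          rw [hC]
          intro y hy
          refine TrivSqZeroExt.ext ?_ ?_
          · -- use the eps-twist of y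
            rw [fst_zero]
            set e : DualNumber (ZMod 4) := DualNumber.eps with hedef
            have hey : e • y ∈ C := C.smul_mem _ hy
            have h2 := hz (gray (e • y)) ⟨_, hey, rfl⟩
            rw [← hTz, key2] at h2
            rw [← h2, snd_sum, fst_sum]
            refine Finset.sum_congr rfl fun i _ => ?_
            have h3 : (e • y) i = e * y i := by
              rw [Pi.smul_apply, smul_eq_mul]
            rw [show x i * (e • y) i = e * (x i * y i) by rw [h3]; ring]
            rw [hedef]
            simp
          · rw [snd_zero]
            have h1 := hz (gray y) ⟨_, hy, rfl⟩
            rw [← hTz, key2] at h1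
            simpa using h1
        exact this
      exact ⟨gray x, Set.mem_image_of_mem _ hxC, hTz⟩
    · rintro ⟨_, ⟨x, hx, rfl⟩, rfl⟩ _ ⟨y, hy, rfl⟩
      rw [key2, hmem x hx y hy]
      simp
  -- conclude by cardinality
  have hcard : ({z : Fin n ⊕ Fin n → ZMod 4 | ∀ w ∈ S, ∑ j, z j * w j = 0}).ncard
      ≤ S.ncard := by
    rw [hdual, Set.ncard_image_of_injective _ grayT_injective]
  exact Set.eq_of_subset_of_ncard_le hsub hcard (Set.toFinite _)
end

section
/- Let C be a linear code over R = Z4 + uZ4 with mu(C) = D a nonzero Z4-linear code. If d is the minimum nonzero Lee weight of C and d' that of D, then d <= 2d'. -/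
open TrivSqZeroExt

lemma eps_mul_fst (x : DualNumber (ZMod 4)) : ((DualNumber.eps : DualNumber (ZMod 4)) * x).fst = 0 := by
  rw [fst_mul, DualNumber.fst_eps, zero_mul]

lemma eps_mul_snd (x : DualNumber (ZMod 4)) : ((DualNumber.eps : DualNumber (ZMod 4)) * x).snd = x.fst := by
  rw [snd_mul, DualNumber.fst_eps, DualNumber.snd_eps, zero_smul, zero_add, op_smul_eq_mul, one_mul]

/-- if `C` is a linear code over `R` whose projection
`μ(C) = D` (with `μ(a+ub) = a`) is nonzero, and `d`, `d'` are the minimum nonzero Lee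
weights of `C` and `D` respectively, then `d ≤ 2 * d'`. -/
theorem stmt_16 (n : ℕ) (C : Submodule (DualNumber (ZMod 4)) (Fin n → DualNumber (ZMod 4)))
    (d d' : ℕ)
    (hd : IsLeast {w | ∃ x ∈ C, x ≠ 0 ∧ wtR x = w} d)
    (hd' : IsLeast {w | ∃ y ∈ (fun x (i : Fin n) => (x i).fst) ''
        (C : Set (Fin n → DualNumber (ZMod 4))), y ≠ 0 ∧ wtZ4 y = w} d') :
    d ≤ 2 * d' := by
  obtain ⟨⟨y, ⟨x, hxC, hxy⟩, hy0, hyw⟩, -⟩ := hd'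
  have hz : (DualNumber.eps : DualNumber (ZMod 4)) • x ∈ C := C.smul_mem _ hxC
  have hz0 : (DualNumber.eps : DualNumber (ZMod 4)) • x ≠ 0 := by
    intro h
    apply hy0
    funext i
    have := congrFun h i
    have h2 : ((DualNumber.eps : DualNumber (ZMod 4)) * x i).snd = 0 := by
      rw [show (DualNumber.eps : DualNumber (ZMod 4)) * x i = (0 : DualNumber (ZMod 4)) from this]; rfl
    rw [eps_mul_snd] at h2
    rw [← hxy]; exact h2
  have hw : wtR ((DualNumber.eps : DualNumber (ZMod 4)) • x) = 2 * d' := by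
    rw [← hyw]
    unfold wtR wtZ4 leeR
    rw [Finset.mul_sum]
    apply Finset.sum_congr rfl
    intro i _
    have h1 : ((DualNumber.eps : DualNumber (ZMod 4)) • x) i = (DualNumber.eps : DualNumber (ZMod 4)) * x i := rfl
    rw [h1, eps_mul_fst, eps_mul_snd, zero_add, ← hxy, two_mul]
  exact hw ▸ hd.2 ⟨(DualNumber.eps : DualNumber (ZMod 4)) • x, hz, hz0, rfl⟩
end

section
/- Let C be a linear code over R = Z4 + uZ4 with alpha(C) = E a nonzero (F2+uF2)-linear code, where alpha is mod-2 reduction. If d is the minimum nonzero Lee weight of C and d'' that of E, then d <= 2d''. -/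
open TrivSqZeroExt

open TrivSqZeroExt

/-- Mod-2 reduction `α : Z4 + uZ4 → F2 + uF2`, `α(a + u b) = (a mod 2) + u (b mod 2)`. -/
def alphaMap (x : DualNumber (ZMod 4)) : DualNumber (ZMod 2) :=
  inl (ZMod.castHom (by norm_num : (2:ℕ) ∣ 4) (ZMod 2) x.fst) +
    inr (ZMod.castHom (by norm_num : (2:ℕ) ∣ 4) (ZMod 2) x.snd)

/-- The Lee weight on `F2 + uF2`: `w(0)=0, w(1)=w(1+u)=1, w(u)=2`,
written as `w(a+ub) = w(b) + w(a+b)`. -/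
def leeF (x : DualNumber (ZMod 2)) : ℕ := (x.snd).val + (x.fst + x.snd).val

/-- Lee weight of a vector over `F2 + uF2`. -/
def wtF {n : ℕ} (x : Fin n → DualNumber (ZMod 2)) : ℕ := ∑ i, leeF (x i)

lemma two_dvd_four : (2:ℕ) ∣ 4 := by norm_num

lemma leeZ4_double (t : ZMod 4) :
    leeZ4 (t + t) = 2 * (ZMod.castHom two_dvd_four (ZMod 2) t).val := by
  revert t; decide

lemma leeR_double (r : DualNumber (ZMod 4)) :
    leeR (r + r) = 2 * leeF (alphaMap r) := by
  have hf : (alphaMap r).fst = ZMod.castHom (by norm_num : (2:ℕ) ∣ 4) (ZMod 2) r.fst := by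
    simp [alphaMap]
  have hs : (alphaMap r).snd = ZMod.castHom (by norm_num : (2:ℕ) ∣ 4) (ZMod 2) r.snd := by
    simp [alphaMap]
  rw [leeR]
  simp only [TrivSqZeroExt.fst_add, TrivSqZeroExt.snd_add]
  have h1 : r.fst + r.fst + (r.snd + r.snd) = (r.fst + r.snd) + (r.fst + r.snd) := by ring
  rw [h1, leeZ4_double, leeZ4_double, leeF, hf, hs, ← map_add]
  have hcast : ∀ a : ZMod 4, ZMod.castHom (by norm_num : (2:ℕ) ∣ 4) (ZMod 2) a
      = ZMod.castHom two_dvd_four (ZMod 2) a := fun _ => rfl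
  rw [hcast, hcast]
  ring

lemma leeF_eq_zero {z : DualNumber (ZMod 2)} (h : leeF z = 0) : z = 0 := by
  rw [leeF, Nat.add_eq_zero] at h
  have hs : z.snd = 0 := (ZMod.val_eq_zero _).mp h.1
  have hfs : z.fst + z.snd = 0 := (ZMod.val_eq_zero _).mp h.2
  rw [hs, add_zero] at hfs
  exact TrivSqZeroExt.ext hfs hs

/-- if `C` is a linear code over `R` whose mod-2 projection
`α(C) = E` is nonzero, and `d`, `d''` are the minimum nonzero Lee weights of `C` and
`E` respectively, then `d ≤ 2 * d''`. -/
theorem stmt_17 (n : ℕ) (C : Submodule (DualNumber (ZMod 4)) (Fin n → DualNumber (ZMod 4)))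
    (d d'' : ℕ)
    (hd : IsLeast {w | ∃ x ∈ C, x ≠ 0 ∧ wtR x = w} d)
    (hd'' : IsLeast {w | ∃ y ∈ (fun x (i : Fin n) => alphaMap (x i)) ''
        (C : Set (Fin n → DualNumber (ZMod 4))), y ≠ 0 ∧ wtF y = w} d'') :
    d ≤ 2 * d'' := by
  obtain ⟨y, ⟨x, hxC, hxy⟩, hy0, hwy⟩ := hd''.1
  -- y is nonzero so d'' ≥ 1
  have hd''pos : 0 < d'' := by
    rcases Nat.eq_zero_or_pos d'' with h0 | h; swap; · exact h
    exfalso; apply hy0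
    funext i
    have hsum : wtF y = 0 := by rw [hwy, h0]
    rw [wtF, Finset.sum_eq_zero_iff] at hsum
    exact leeF_eq_zero (hsum i (Finset.mem_univ i))
  have hmem : x + x ∈ C := C.add_mem hxC hxC
  have hw : wtR (x + x) = 2 * d'' := by
    rw [wtR, ← hwy, wtF, Finset.mul_sum]
    refine Finset.sum_congr rfl fun i _ => ?_
    have : (x + x) i = x i + x i := rfl
    rw [this, leeR_double, ← hxy]
  have hne : x + x ≠ 0 := by
    intro h0
    rw [h0] at hw
    have : wtR (0 : Fin n → DualNumber (ZMod 4)) = 0 := by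
      simp [wtR, leeR, leeZ4]
    omega
  have := hd.2 ⟨x + x, hmem, hne, hw⟩
  exact this
end
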